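/- arXiv:2104.11839 — 2 statements merged into one kernel-verified Lean document; each statement's English description precedes it below -/
import Mathlib

section
/- Let T : J → J (J ⊂ ℝ^d) satisfy ‖(DT(x))^{-1}‖ ≤ λ^{-1} with λ > 1, and let r satisfy (H1): ‖D(r∘h)(x)‖ ≤ C_4 for every inverse branch h of T. Set C_7 := max{2C_4ρ(1−λ^{-1})^{-1}, (1−λ^{-1})C_4} and 𝒞 := {(a,t) ∈ ℝ^d × ℝ : |t| ≤ C_7‖a‖}. Then for every x ∈ J the matrix 𝒟(x) = [[DT(x), 0], [−Dr(x), 1]] maps 𝒞 into 𝒞; consequently, 𝒟^n(x) = [[DT^n(x), 0], [−D(S_n r)(x), 1]] maps 𝒞 into 𝒞 for every x ∈ J and every n ≥ 1. -/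
open scoped BigOperators

noncomputable section

/-- The derivative cocycle `DT^n(x) = DT(T^{n-1}x) ∘ ⋯ ∘ DT(x)`. -/
def Dcocycle {d : ℕ} (T : EuclideanSpace ℝ (Fin d) → EuclideanSpace ℝ (Fin d))
    (DT : EuclideanSpace ℝ (Fin d) → (EuclideanSpace ℝ (Fin d) →L[ℝ] EuclideanSpace ℝ (Fin d)))
    (x : EuclideanSpace ℝ (Fin d)) :
    ℕ → (EuclideanSpace ℝ (Fin d) →L[ℝ] EuclideanSpace ℝ (Fin d))
  | 0 => ContinuousLinearMap.id ℝ _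
  | n + 1 => (DT (T^[n] x)).comp (Dcocycle T DT x n)

/-- The inverse cocycle `(DT^n(x))⁻¹ = DT(x)⁻¹ ∘ ⋯ ∘ DT(T^{n-1}x)⁻¹`. -/
def DcocycleInv {d : ℕ} (T : EuclideanSpace ℝ (Fin d) → EuclideanSpace ℝ (Fin d))
    (DTinv : EuclideanSpace ℝ (Fin d) → (EuclideanSpace ℝ (Fin d) →L[ℝ] EuclideanSpace ℝ (Fin d)))
    (x : EuclideanSpace ℝ (Fin d)) :
    ℕ → (EuclideanSpace ℝ (Fin d) →L[ℝ] EuclideanSpace ℝ (Fin d))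
  | 0 => ContinuousLinearMap.id ℝ _
  | n + 1 => (DcocycleInv T DTinv x n).comp (DTinv (T^[n] x))

/-- The derivative `D(S_n r)(x) = ∑_{j<n} Dr(T^j x) ∘ DT^j(x)` of the Birkhoff sum. -/
def DBirkhoff {d : ℕ} (T : EuclideanSpace ℝ (Fin d) → EuclideanSpace ℝ (Fin d))
    (DT : EuclideanSpace ℝ (Fin d) → (EuclideanSpace ℝ (Fin d) →L[ℝ] EuclideanSpace ℝ (Fin d)))
    (Dr : EuclideanSpace ℝ (Fin d) → (EuclideanSpace ℝ (Fin d) →L[ℝ] ℝ))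
    (x : EuclideanSpace ℝ (Fin d)) (n : ℕ) : EuclideanSpace ℝ (Fin d) →L[ℝ] ℝ :=
  ∑ j ∈ Finset.range n, (Dr (T^[j] x)).comp (Dcocycle T DT x j)

/-- The cone `𝒞 = {(a,t) ∈ ℝ^d × ℝ : |t| ≤ C₇ ‖a‖}`. -/
def coneC {d : ℕ} (C₇ : ℝ) : Set ((EuclideanSpace ℝ (Fin d)) × ℝ) :=
  {p | |p.2| ≤ C₇ * ‖p.1‖}

/-- The block matrix `𝒟^n(x) = [[DT^n(x), 0], [−D(S_n r)(x), 1]]` acting on `ℝ^d × ℝ`. -/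
def Dmat {d : ℕ} (T : EuclideanSpace ℝ (Fin d) → EuclideanSpace ℝ (Fin d))
    (DT : EuclideanSpace ℝ (Fin d) → (EuclideanSpace ℝ (Fin d) →L[ℝ] EuclideanSpace ℝ (Fin d)))
    (Dr : EuclideanSpace ℝ (Fin d) → (EuclideanSpace ℝ (Fin d) →L[ℝ] ℝ))
    (x : EuclideanSpace ℝ (Fin d)) (n : ℕ) :
    ((EuclideanSpace ℝ (Fin d)) × ℝ) → ((EuclideanSpace ℝ (Fin d)) × ℝ) :=
  fun p => (Dcocycle T DT x n p.1, p.2 - DBirkhoff T DT Dr x n p.1)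

/-- The image cone `𝒟^n(x)𝒞`. -/
def Dimage {d : ℕ} (T : EuclideanSpace ℝ (Fin d) → EuclideanSpace ℝ (Fin d))
    (DT : EuclideanSpace ℝ (Fin d) → (EuclideanSpace ℝ (Fin d) →L[ℝ] EuclideanSpace ℝ (Fin d)))
    (Dr : EuclideanSpace ℝ (Fin d) → (EuclideanSpace ℝ (Fin d) →L[ℝ] ℝ))
    (C₇ : ℝ) (x : EuclideanSpace ℝ (Fin d)) (n : ℕ) :
    Set ((EuclideanSpace ℝ (Fin d)) × ℝ) :=
  Dmat T DT Dr x n '' coneC C₇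

/-- Two sets `A, B ⊆ ℝ^d × ℝ` are transversal if `A ∩ B` contains no
`d`-dimensional linear subspace. -/
def Transversal {d : ℕ} (A B : Set ((EuclideanSpace ℝ (Fin d)) × ℝ)) : Prop :=
  ¬ ∃ V : Submodule ℝ ((EuclideanSpace ℝ (Fin d)) × ℝ),
      Module.finrank ℝ ↥V = d ∧ (V : Set ((EuclideanSpace ℝ (Fin d)) × ℝ)) ⊆ A ∩ B

/-- The cone `𝒞 = {(a,t) : |t| ≤ C₇‖a‖}` is invariant: for every `x ∈ J`
the matrix `𝒟(x) = [[DT(x),0],[−Dr(x),1]]` maps `𝒞` into `𝒞`, and consequently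
`𝒟^n(x) = [[DT^n(x),0],[−D(S_n r)(x),1]]` maps `𝒞` into `𝒞` for every `n ≥ 1`. -/
theorem stmt_7 {d : ℕ}
    (J : Set (EuclideanSpace ℝ (Fin d)))
    (T : EuclideanSpace ℝ (Fin d) → EuclideanSpace ℝ (Fin d))
    (DT DTinv : EuclideanSpace ℝ (Fin d) → (EuclideanSpace ℝ (Fin d) →L[ℝ] EuclideanSpace ℝ (Fin d)))
    (Dr : EuclideanSpace ℝ (Fin d) → (EuclideanSpace ℝ (Fin d) →L[ℝ] ℝ))
    (lam rho C₄ C₇ : ℝ) (hlam : 1 < lam) (hrho : lam ≤ rho)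
    (hC₇ : C₇ = max (2 * C₄ * rho * (1 - lam⁻¹)⁻¹) ((1 - lam⁻¹) * C₄))
    (hTmaps : Set.MapsTo T J J)
    (hDT : ∀ x ∈ J, ‖DT x‖ ≤ rho)
    (hinv₁ : ∀ x ∈ J, (DTinv x).comp (DT x) = ContinuousLinearMap.id ℝ _)
    (hinv₂ : ∀ x ∈ J, (DT x).comp (DTinv x) = ContinuousLinearMap.id ℝ _)
    (hDTinv : ∀ x ∈ J, ‖DTinv x‖ ≤ lam⁻¹)
    (hNinv : ∀ x ∈ J, ∀ n : ℕ, ‖DcocycleInv T DTinv x n‖ ≤ (lam ^ n)⁻¹)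
    (hH1 : ∀ x ∈ J, ‖(Dr x).comp (DTinv x)‖ ≤ C₄)
    : (∀ x ∈ J, Set.MapsTo (Dmat T DT Dr x 1) (coneC C₇) (coneC C₇)) ∧
      (∀ x ∈ J, ∀ n : ℕ, 1 ≤ n → Set.MapsTo (Dmat T DT Dr x n) (coneC C₇) (coneC C₇)) := by
  have hlampos : (0:ℝ) < lam := lt_trans one_pos hlam
  have hlaminv : lam⁻¹ < 1 := inv_lt_one_of_one_lt₀ hlam
  have hone : (0:ℝ) < 1 - lam⁻¹ := by linarith
  have key : ∀ x ∈ J, Set.MapsTo (Dmat T DT Dr x 1) (coneC C₇) (coneC C₇) := by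
    intro x hx p hp
    have hC₄ : 0 ≤ C₄ := le_trans (norm_nonneg _) (hH1 x hx)
    have hC₇0 : 0 ≤ C₇ := by
      rw [hC₇]
      exact le_trans (mul_nonneg hone.le hC₄) (le_max_right _ _)
    have hid : p.1 = DTinv x (DT x p.1) := by
      have := congrArg (fun f => f p.1) (hinv₁ x hx)
      simpa using this.symm
    have ha : ‖p.1‖ ≤ lam⁻¹ * ‖DT x p.1‖ := by
      calc ‖p.1‖ = ‖DTinv x (DT x p.1)‖ := by rw [← hid]
        _ ≤ ‖DTinv x‖ * ‖DT x p.1‖ := (DTinv x).le_opNorm _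
        _ ≤ lam⁻¹ * ‖DT x p.1‖ :=
            mul_le_mul_of_nonneg_right (hDTinv x hx) (norm_nonneg _)
    have hr : |Dr x p.1| ≤ C₄ * ‖DT x p.1‖ := by
      have h1 : Dr x p.1 = ((Dr x).comp (DTinv x)) (DT x p.1) := by
        simp [← hid]
      rw [h1]
      calc |((Dr x).comp (DTinv x)) (DT x p.1)|
          ≤ ‖(Dr x).comp (DTinv x)‖ * ‖DT x p.1‖ :=
            ((Dr x).comp (DTinv x)).le_opNorm _
        _ ≤ C₄ * ‖DT x p.1‖ :=
            mul_le_mul_of_nonneg_right (hH1 x hx) (norm_nonneg _)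
    have hcone : |p.2| ≤ C₇ * ‖p.1‖ := hp
    have hC : C₄ ≤ C₇ * (1 - lam⁻¹) := by
      have h1 : 2 * C₄ * rho * (1 - lam⁻¹)⁻¹ ≤ C₇ := by rw [hC₇]; exact le_max_left _ _
      have h2 : 2 * C₄ * rho * (1 - lam⁻¹)⁻¹ * (1 - lam⁻¹) = 2 * C₄ * rho := by
        rw [mul_assoc, inv_mul_cancel₀ hone.ne', mul_one]
      nlinarith [mul_le_mul_of_nonneg_right h1 hone.le, mul_nonneg hC₄ (by linarith : (0:ℝ) ≤ rho - 1)]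
    show |p.2 - DBirkhoff T DT Dr x 1 p.1| ≤ C₇ * ‖Dcocycle T DT x 1 p.1‖
    have hB : DBirkhoff T DT Dr x 1 p.1 = Dr x p.1 := by
      simp [DBirkhoff, Dcocycle]
    have hD : Dcocycle T DT x 1 p.1 = DT x p.1 := by
      simp [Dcocycle]
    rw [hB, hD]
    calc |p.2 - Dr x p.1| ≤ |p.2| + |Dr x p.1| := abs_sub _ _
      _ ≤ C₇ * (lam⁻¹ * ‖DT x p.1‖) + C₄ * ‖DT x p.1‖ := by
          gcongr
          exact hcone.trans (mul_le_mul_of_nonneg_left ha hC₇0)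
      _ ≤ C₇ * ‖DT x p.1‖ := by nlinarith [norm_nonneg (DT x p.1)]
  refine ⟨key, fun x hx n hn => ?_⟩
  clear hn hNinv
  induction n generalizing x with
  | zero =>
    intro p hp
    simpa [Dmat, Dcocycle, DBirkhoff] using hp
  | succ n ih =>
    have hstep : ∀ p, Dmat T DT Dr x (n+1) p
        = Dmat T DT Dr (T^[n] x) 1 (Dmat T DT Dr x n p) := by
      intro p
      simp [Dmat, Dcocycle, DBirkhoff, Finset.sum_range_succ]
      ring
    intro p hp
    rw [hstep]
    exact key _ (hTmaps.iterate n hx) (ih x hx hp)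
end
end

section
/- Let y ∈ J, n ≥ 1, and let ω, ω̄ ∈ 𝒫^{(n)} with inverse branches h_ω, h_{ω̄} defined at y. If there exists a d-dimensional linear subspace E ⊂ ℝ^{d+1} contained in both image cones 𝒟^n(h_ω y)𝒞 and 𝒟^n(h_{ω̄} y)𝒞, then for every a ∈ ℝ^d one has |D(S_n r ∘ h_ω)(y)a − D(S_n r ∘ h_{ω̄})(y)a| ≤ 2 C_7 λ^{-n} ‖a‖. -/
open scoped BigOperators

noncomputable section

/-- Let `y ∈ J` and `ω, ω̄ ∈ 𝒫^{(n)}` with inverse branches defined at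
`y`; write `y₁ = h_ω(y)`, `y₂ = h_{ω̄}(y)` (so `T^n y₁ = T^n y₂ = y`). If some
`d`-dimensional subspace `E ⊆ ℝ^{d+1}` is contained in both image cones `𝒟^n(y₁)𝒞` and
`𝒟^n(y₂)𝒞`, then `|D(S_n r∘h_ω)(y)a − D(S_n r∘h_{ω̄})(y)a| ≤ 2C₇λ^{-n}‖a‖` for every
`a ∈ ℝ^d`, where `D(S_n r∘h_ω)(y) = D(S_n r)(y₁) ∘ (DT^n(y₁))⁻¹`. -/
theorem stmt_8 {d : ℕ}
    (J : Set (EuclideanSpace ℝ (Fin d)))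
    (T : EuclideanSpace ℝ (Fin d) → EuclideanSpace ℝ (Fin d))
    (DT DTinv : EuclideanSpace ℝ (Fin d) → (EuclideanSpace ℝ (Fin d) →L[ℝ] EuclideanSpace ℝ (Fin d)))
    (Dr : EuclideanSpace ℝ (Fin d) → (EuclideanSpace ℝ (Fin d) →L[ℝ] ℝ))
    (lam rho C₄ C₇ : ℝ) (hlam : 1 < lam) (hrho : lam ≤ rho)
    (hC₇ : C₇ = max (2 * C₄ * rho * (1 - lam⁻¹)⁻¹) ((1 - lam⁻¹) * C₄))
    (hTmaps : Set.MapsTo T J J)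
    (hDT : ∀ x ∈ J, ‖DT x‖ ≤ rho)
    (hinv₁ : ∀ x ∈ J, (DTinv x).comp (DT x) = ContinuousLinearMap.id ℝ _)
    (hinv₂ : ∀ x ∈ J, (DT x).comp (DTinv x) = ContinuousLinearMap.id ℝ _)
    (hDTinv : ∀ x ∈ J, ‖DTinv x‖ ≤ lam⁻¹)
    (hNinv : ∀ x ∈ J, ∀ n : ℕ, ‖DcocycleInv T DTinv x n‖ ≤ (lam ^ n)⁻¹)
    (hH1 : ∀ x ∈ J, ‖(Dr x).comp (DTinv x)‖ ≤ C₄)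
    (n : ℕ) (y₁ y₂ : EuclideanSpace ℝ (Fin d)) (hy₁ : y₁ ∈ J) (hy₂ : y₂ ∈ J)
    (hsame : T^[n] y₁ = T^[n] y₂)
    (hE : ∃ V : Submodule ℝ ((EuclideanSpace ℝ (Fin d)) × ℝ),
        Module.finrank ℝ ↥V = d ∧
        (V : Set ((EuclideanSpace ℝ (Fin d)) × ℝ)) ⊆
          Dimage T DT Dr C₇ y₁ n ∩ Dimage T DT Dr C₇ y₂ n) :
    ∀ a : EuclideanSpace ℝ (Fin d),
      |((DBirkhoff T DT Dr y₁ n).comp (DcocycleInv T DTinv y₁ n)) a -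
        ((DBirkhoff T DT Dr y₂ n).comp (DcocycleInv T DTinv y₂ n)) a| ≤
        2 * C₇ * (lam ^ n)⁻¹ * ‖a‖ := by
  intro a
  obtain ⟨V, hVrank, hVsub⟩ := hE
  have hiter : ∀ x ∈ J, ∀ j : ℕ, T^[j] x ∈ J := fun x hx j => hTmaps.iterate j hx
  -- left inverse lemma
  have hLI : ∀ x ∈ J, ∀ m : ℕ,
      (DcocycleInv T DTinv x m).comp (Dcocycle T DT x m) = ContinuousLinearMap.id ℝ _ := by
    intro x hx m
    induction m with
    | zero => rfl
    | succ m ih =>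
      ext v
      have hp := hiter x hx m
      have h1 := congrArg (fun f : _ →L[ℝ] _ => f (Dcocycle T DT x m v)) (hinv₁ _ hp)
      have h2 := congrArg (fun f : _ →L[ℝ] _ => f v) ih
      simp only [ContinuousLinearMap.comp_apply, ContinuousLinearMap.id_apply] at h1 h2 ⊢
      simp only [DcocycleInv, Dcocycle, ContinuousLinearMap.comp_apply]
      rw [h1, h2]
  have hC₄ : 0 ≤ C₄ := le_trans (norm_nonneg _) (hH1 y₁ hy₁)
  have hlam0 : (0:ℝ) < lam := lt_trans one_pos hlam
  have hlaminv : lam⁻¹ ≤ 1 := by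
    rw [inv_le_one_iff₀]; right; exact hlam.le
  have hC₇0 : 0 ≤ C₇ := by
    rw [hC₇]
    exact le_max_of_le_right (mul_nonneg (by linarith) hC₄)
  -- key pointwise estimate
  have key : ∀ yi, yi ∈ J → ∀ p ∈ Dimage T DT Dr C₇ yi n,
      |p.2 + ((DBirkhoff T DT Dr yi n).comp (DcocycleInv T DTinv yi n)) p.1|
        ≤ C₇ * (lam ^ n)⁻¹ * ‖p.1‖ := by
    intro yi hyi p hp
    obtain ⟨q, hq, hpq⟩ := hp
    have hp1 : p.1 = Dcocycle T DT yi n q.1 := by rw [← hpq]; rfl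
    have hp2 : p.2 = q.2 - DBirkhoff T DT Dr yi n q.1 := by rw [← hpq]; rfl
    have hc : DcocycleInv T DTinv yi n p.1 = q.1 := by
      rw [hp1]
      have := congrArg (fun f : _ →L[ℝ] _ => f q.1) (hLI yi hyi n)
      simpa using this
    have hval : p.2 + ((DBirkhoff T DT Dr yi n).comp (DcocycleInv T DTinv yi n)) p.1 = q.2 := by
      rw [ContinuousLinearMap.comp_apply, hc, hp2]; ring
    rw [hval]
    have h1 : |q.2| ≤ C₇ * ‖q.1‖ := hq
    have h2 : ‖q.1‖ ≤ (lam ^ n)⁻¹ * ‖p.1‖ := by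
      calc ‖q.1‖ = ‖DcocycleInv T DTinv yi n p.1‖ := by rw [hc]
        _ ≤ ‖DcocycleInv T DTinv yi n‖ * ‖p.1‖ := (DcocycleInv T DTinv yi n).le_opNorm p.1
        _ ≤ (lam ^ n)⁻¹ * ‖p.1‖ :=
            mul_le_mul_of_nonneg_right (hNinv yi hyi n) (norm_nonneg _)
    calc |q.2| ≤ C₇ * ‖q.1‖ := h1
      _ ≤ C₇ * ((lam ^ n)⁻¹ * ‖p.1‖) := mul_le_mul_of_nonneg_left h2 hC₇0
      _ = C₇ * (lam ^ n)⁻¹ * ‖p.1‖ := by ring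
  -- the projection V → ℝ^d is bijective
  set f : V →ₗ[ℝ] EuclideanSpace ℝ (Fin d) :=
    (LinearMap.fst ℝ (EuclideanSpace ℝ (Fin d)) ℝ).comp V.subtype with hf
  have hinj : Function.Injective f := by
    rw [← LinearMap.ker_eq_bot]
    rw [Submodule.eq_bot_iff]
    rintro ⟨p, hpV⟩ hker
    have hp1 : p.1 = 0 := hker
    have hp' := (hVsub hpV).1
    obtain ⟨q, hq, hpq⟩ := hp'
    have hc1 : p.1 = Dcocycle T DT y₁ n q.1 := by rw [← hpq]; rfl
    have hq1 : q.1 = 0 := by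
      have := congrArg (fun g : _ →L[ℝ] _ => g q.1) (hLI y₁ hy₁ n)
      simp only [ContinuousLinearMap.comp_apply, ContinuousLinearMap.id_apply] at this
      rw [← this, ← hc1, hp1, map_zero]
    have hq2 : q.2 = 0 := by
      have h1 : |q.2| ≤ C₇ * ‖q.1‖ := hq
      rw [hq1, norm_zero, mul_zero] at h1
      exact abs_nonpos_iff.mp h1
    have hp2 : p.2 = 0 := by
      have : p.2 = q.2 - DBirkhoff T DT Dr y₁ n q.1 := by rw [← hpq]; rfl
      rw [this, hq1, hq2, map_zero]; ring
    ext
    · exact congrFun (congrArg WithLp.ofLp hp1) _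
    · exact hp2
  have hfd : FiniteDimensional ℝ V := inferInstance
  have hrk : Module.finrank ℝ V = Module.finrank ℝ (EuclideanSpace ℝ (Fin d)) := by
    rw [hVrank, finrank_euclideanSpace_fin]
  have hsurj : Function.Surjective f :=
    (LinearMap.injective_iff_surjective_of_finrank_eq_finrank hrk).mp hinj
  obtain ⟨⟨p, hpV⟩, hfa⟩ := hsurj a
  have hpa : p.1 = a := hfa
  have h1 := key y₁ hy₁ p (hVsub hpV).1
  have h2 := key y₂ hy₂ p (hVsub hpV).2
  rw [hpa] at h1 h2
  calc |((DBirkhoff T DT Dr y₁ n).comp (DcocycleInv T DTinv y₁ n)) a -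
        ((DBirkhoff T DT Dr y₂ n).comp (DcocycleInv T DTinv y₂ n)) a|
      = |(p.2 + ((DBirkhoff T DT Dr y₁ n).comp (DcocycleInv T DTinv y₁ n)) a) -
        (p.2 + ((DBirkhoff T DT Dr y₂ n).comp (DcocycleInv T DTinv y₂ n)) a)| := by ring_nf
    _ ≤ |p.2 + ((DBirkhoff T DT Dr y₁ n).comp (DcocycleInv T DTinv y₁ n)) a| +
        |p.2 + ((DBirkhoff T DT Dr y₂ n).comp (DcocycleInv T DTinv y₂ n)) a| := abs_sub _ _
    _ ≤ C₇ * (lam ^ n)⁻¹ * ‖a‖ + C₇ * (lam ^ n)⁻¹ * ‖a‖ := add_le_add h1 h2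
    _ = 2 * C₇ * (lam ^ n)⁻¹ * ‖a‖ := by ring
end
end
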